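/- Let ℓ > L and let {x^k} be generated by the multiobjective proximal gradient method, i.e., x^{k+1} = x^k + d^k with d^k the minimizer of d ↦ ψ_{x^k}(d) + (ℓ/2)‖d‖². Then for every iteration k and every i ∈ {1,…,m}: F_i(x^{k+1}) − F_i(x^k) ≤ −w_ℓ(x^k), and in particular F_i(x^{k+1}) ≤ F_i(x^k). -/

import Mathlib

open Filter Topology

noncomputable section

/-- Convexity for extended-real-valued functions. -/
def ERealConvexOn {E : Type*} [AddCommGroup E] [Module ℝ E] (g : E → EReal) : Prop :=
  ∀ x y : E, ∀ a b : ℝ, 0 ≤ a → 0 ≤ b → a + b = 1 →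
    g (a • x + b • y) ≤ (a : EReal) * g x + (b : EReal) * g y

/-- Strong convexity (modulus σ) for extended-real-valued functions. -/
def ERealStrongConvexOn {E : Type*} [NormedAddCommGroup E] [NormedSpace ℝ E]
    (σ : ℝ) (g : E → EReal) : Prop :=
  ∀ x y : E, ∀ a b : ℝ, 0 ≤ a → 0 ≤ b → a + b = 1 →
    g (a • x + b • y) + ((σ / 2 * (a * b) * ‖x - y‖ ^ 2 : ℝ) : EReal)
      ≤ (a : EReal) * g x + (b : EReal) * g y

/-- Directional derivative (as a limit, encoded by `liminf`, of forward difference quotients). -/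
def dirDeriv {E : Type*} [NormedAddCommGroup E] [NormedSpace ℝ E]
    (φ : E → EReal) (x d : E) : EReal :=
  Filter.liminf (fun t : ℝ => ((t⁻¹ : ℝ) : EReal) * (φ (x + t • d) - φ x)) (𝓝[>] (0 : ℝ))

/-- The merit function u₀. -/
def u0 {n m : ℕ} (F : Fin m → EuclideanSpace ℝ (Fin n) → EReal)
    (x : EuclideanSpace ℝ (Fin n)) : EReal :=
  ⨆ y : EuclideanSpace ℝ (Fin n), ⨅ i, (F i x - F i y)

/-- The regularized merit function w_ℓ. -/
def wfun {n m : ℕ} (f : Fin m → EuclideanSpace ℝ (Fin n) → ℝ)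
    (g : Fin m → EuclideanSpace ℝ (Fin n) → EReal) (ℓ : ℝ)
    (x : EuclideanSpace ℝ (Fin n)) : EReal :=
  ⨆ y : EuclideanSpace ℝ (Fin n), ⨅ i,
    (((inner ℝ (gradient (f i) x) (x - y) : ℝ)) : EReal) + (g i x - g i y)
      - ((ℓ / 2 * ‖x - y‖ ^ 2 : ℝ) : EReal)

/-- The mapping ψ_x. -/
def psi {n m : ℕ} (f : Fin m → EuclideanSpace ℝ (Fin n) → ℝ)
    (g : Fin m → EuclideanSpace ℝ (Fin n) → EReal)
    (x d : EuclideanSpace ℝ (Fin n)) : EReal :=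
  ⨆ i, ((inner ℝ (gradient (f i) x) d : ℝ) : EReal) + (g i (x + d) - g i x)


open intervalIntegral in
lemma descent_lemma {E : Type*} [NormedAddCommGroup E] [InnerProductSpace ℝ E]
    [CompleteSpace E]
    (f : E → ℝ) (hf : ContDiff ℝ 1 f) (K : ℝ) (hK : 0 ≤ K)
    (hlip : LipschitzWith K.toNNReal (gradient f)) (x d : E) :
    f (x + d) ≤ f x + (inner ℝ (gradient f x) d : ℝ) + K / 2 * ‖d‖ ^ 2 := by
  have hdiff : ∀ z : E, HasGradientAt f (gradient f z) z := fun z =>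
    ((hf.differentiable one_ne_zero) z).hasGradientAt
  set φ' : ℝ → ℝ := fun t => (inner ℝ (gradient f (x + t • d)) d : ℝ) with hφ'
  have hderiv : ∀ t : ℝ, HasDerivAt (fun t : ℝ => f (x + t • d)) (φ' t) t := by
    intro t
    have h1 : HasFDerivAt f ((InnerProductSpace.toDual ℝ E (gradient f (x + t • d)) : E →L[ℝ] ℝ)) (x + t • d) := (hdiff (x + t • d)).hasFDerivAt
    have h2 : HasDerivAt (fun t : ℝ => x + t • d) d t := by
      simpa using ((hasDerivAt_id t).smul_const d).const_add x
    exact (h1.comp_hasDerivAt t h2).congr_deriv rfl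
  have hgradcont : Continuous (gradient f) := hlip.continuous
  have hcont : Continuous φ' := by
    apply Continuous.inner
    · exact hgradcont.comp (by continuity)
    · exact continuous_const
  have hFTC : ∫ t in (0:ℝ)..1, φ' t = f (x + d) - f x := by
    have h := integral_eq_sub_of_hasDerivAt (f := fun t : ℝ => f (x + t • d)) (f' := φ')
      (a := 0) (b := 1) (fun t _ => hderiv t) (hcont.intervalIntegrable 0 1)
    simp only [one_smul, zero_smul, add_zero] at h
    exact h
  have hbound : ∀ t ∈ Set.Icc (0:ℝ) 1, φ' t ≤ (inner ℝ (gradient f x) d : ℝ) + K * t * ‖d‖ ^ 2 := by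
    intro t ht
    have h1 : φ' t - (inner ℝ (gradient f x) d : ℝ) = (inner ℝ (gradient f (x + t • d) - gradient f x) d : ℝ) := by
      rw [inner_sub_left]
    have h2 : (inner ℝ (gradient f (x + t • d) - gradient f x) d : ℝ) ≤ ‖gradient f (x + t • d) - gradient f x‖ * ‖d‖ :=
      real_inner_le_norm _ _
    have h3 : ‖gradient f (x + t • d) - gradient f x‖ ≤ K * (t * ‖d‖) := by
      have := hlip.dist_le_mul (x + t • d) x
      simp only [dist_eq_norm] at this
      have h4 : x + t • d - x = t • d := by abel
      rw [h4] at this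
      calc ‖gradient f (x + t • d) - gradient f x‖ ≤ K.toNNReal * ‖t • d‖ := this
        _ ≤ K * (t * ‖d‖) := by
            rw [norm_smul, Real.norm_eq_abs, abs_of_nonneg ht.1, Real.coe_toNNReal _ hK]
    have h5 : (inner ℝ (gradient f (x + t • d) - gradient f x) d : ℝ) ≤ K * (t * ‖d‖) * ‖d‖ :=
      h2.trans (by nlinarith [norm_nonneg d])
    nlinarith [h5]
  have hintle : ∫ t in (0:ℝ)..1, φ' t ≤
      ∫ t in (0:ℝ)..1, ((inner ℝ (gradient f x) d : ℝ) + K * t * ‖d‖ ^ 2) := by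
    apply intervalIntegral.integral_mono_on (by norm_num) (hcont.intervalIntegrable 0 1)
    · exact (Continuous.intervalIntegrable (by continuity) 0 1)
    · exact hbound
  have hieval : ∫ t in (0:ℝ)..1, ((inner ℝ (gradient f x) d : ℝ) + K * t * ‖d‖ ^ 2)
      = (inner ℝ (gradient f x) d : ℝ) + K / 2 * ‖d‖ ^ 2 := by
    rw [intervalIntegral.integral_add (by apply Continuous.intervalIntegrable; continuity)
      (by apply Continuous.intervalIntegrable; continuity)]
    simp only [intervalIntegral.integral_const, smul_eq_mul]
    have : ∫ t in (0:ℝ)..1, K * t * ‖d‖ ^ 2 = K / 2 * ‖d‖ ^ 2 := by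
      have : (fun t : ℝ => K * t * ‖d‖ ^ 2) = fun t : ℝ => (K * ‖d‖ ^ 2) * t := by
        funext t; ring
      rw [this, intervalIntegral.integral_const_mul, integral_id]
      ring
    rw [this]; ring
  linarith [hFTC ▸ (hintle.trans_eq hieval)]


lemma ereal_cases (a : EReal) (h : a ≠ ⊥) : a = ⊤ ∨ ∃ r : ℝ, a = (r : EReal) := by
  induction a with
  | bot => exact absurd rfl h
  | coe r => exact Or.inr ⟨r, rfl⟩
  | top => exact Or.inl rfl

/-- For the multiobjective proximal gradient method with ℓ > L, each objective satisfies
Fᵢ(x^{k+1}) − Fᵢ(x^k) ≤ −w_ℓ(x^k), and in particular Fᵢ(x^{k+1}) ≤ Fᵢ(x^k). -/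
theorem proximal_gradient_sufficient_decrease
    {n m : ℕ} (hm : 0 < m)
    (f : Fin m → EuclideanSpace ℝ (Fin n) → ℝ)
    (g : Fin m → EuclideanSpace ℝ (Fin n) → EReal)
    (hf : ∀ i, ContDiff ℝ 1 (f i))
    (hg_lsc : ∀ i, LowerSemicontinuous (g i))
    (hg_ne_bot : ∀ i x, g i x ≠ ⊥)
    (hg_proper : ∀ i, ∃ x, g i x ≠ ⊤)
    (hg_convex : ∀ i, ERealConvexOn (g i))
    (F : Fin m → EuclideanSpace ℝ (Fin n) → EReal)
    (hF : ∀ i x, F i x = (f i x : EReal) + g i x)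
    (Li : Fin m → ℝ) (hLi : ∀ i, 0 < Li i)
    (hlip : ∀ i, LipschitzWith (Li i).toNNReal (gradient (f i)))
    (L : ℝ) (hL : IsGreatest (Set.range Li) L)
    (ℓ : ℝ) (hℓ : L < ℓ)
    (x d : ℕ → EuclideanSpace ℝ (Fin n))
    (hmin : ∀ (k : ℕ) (d' : EuclideanSpace ℝ (Fin n)),
      psi f g (x k) (d k) + ((ℓ / 2 * ‖d k‖ ^ 2 : ℝ) : EReal) ≤
        psi f g (x k) d' + ((ℓ / 2 * ‖d'‖ ^ 2 : ℝ) : EReal))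
    (hstep : ∀ k, x (k + 1) = x k + d k) :
    ∀ (k : ℕ) (i : Fin m),
      F i (x (k + 1)) - F i (x k) ≤ -(wfun f g ℓ (x k)) ∧
      F i (x (k + 1)) ≤ F i (x k) := by
  intro k i
  haveI : Nonempty (Fin m) := ⟨⟨0, hm⟩⟩
  set X := x k with hX
  set D := d k with hD
  have hstepk : x (k + 1) = X + D := hstep k
  -- the descent inequality for f i
  have hLle : Li i ≤ ℓ := le_of_lt (lt_of_le_of_lt (hL.2 ⟨i, rfl⟩) hℓ)
  have hA : f i (X + D) ≤ f i X + (inner ℝ (gradient (f i) X) D : ℝ) + ℓ / 2 * ‖D‖ ^ 2 := by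
    have h1 := descent_lemma (f i) (hf i) (Li i) (hLi i).le (hlip i) X D
    nlinarith [sq_nonneg ‖D‖]
  set c : EReal := ((ℓ / 2 * ‖D‖ ^ 2 : ℝ) : EReal) with hc
  -- Step B : F i (X + D) - F i X ≤ psi f g X D + c
  have hB : F i (X + D) - F i X ≤ psi f g X D + c := by
    have hpsi_ge : ((inner ℝ (gradient (f i) X) D : ℝ) : EReal) + (g i (X + D) - g i X)
        ≤ psi f g X D := le_iSup (fun j : Fin m =>
          ((inner ℝ (gradient (f j) X) D : ℝ) : EReal) + (g j (X + D) - g j X)) i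
    refine le_trans ?_ (add_le_add_left hpsi_ge c)
    rw [hF i (X + D), hF i X]
    rcases ereal_cases (g i X) (hg_ne_bot i X) with hgX | ⟨r, hgX⟩
    · rw [hgX, EReal.coe_add_top, EReal.sub_top]
      exact bot_le
    · rcases ereal_cases (g i (X + D)) (hg_ne_bot i (X + D)) with hgX' | ⟨s, hgX'⟩
      · rw [hgX, hgX', EReal.coe_add_top, ← EReal.coe_add, EReal.top_sub_coe,
          EReal.top_sub_coe]
        rw [show ((inner ℝ (gradient (f i) X) D : ℝ) : EReal) + ⊤ + c = ⊤ by
          rw [EReal.coe_add_top]; rw [hc]; exact EReal.top_add_coe _]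
      · rw [hgX, hgX', hc]
        norm_cast
        linarith
  -- psi f g X 0 ≤ 0
  have h0 : psi f g X 0 ≤ 0 := by
    apply iSup_le
    intro j
    rw [add_zero]
    rcases ereal_cases (g j X) (hg_ne_bot j X) with hgX | ⟨r, hgX⟩
    · rw [hgX, EReal.sub_top, EReal.add_bot]
      exact bot_le
    · rw [hgX, ← EReal.coe_sub, sub_self,
        show (inner ℝ (gradient (f j) X) (0 : EuclideanSpace ℝ (Fin n)) : ℝ) = 0 from
          inner_zero_right _]
      norm_num
  -- psi f g X D + c ≤ 0
  have hD0 : psi f g X D + c ≤ 0 := by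
    have h1 := hmin k 0
    rw [show (ℓ / 2 * ‖(0 : EuclideanSpace ℝ (Fin n))‖ ^ 2 : ℝ) = 0 by simp] at h1
    rw [EReal.coe_zero, add_zero] at h1
    exact le_trans h1 h0
  have hdiff_le : F i (x (k + 1)) - F i X ≤ 0 := by
    rw [hstepk]; exact hB.trans hD0
  constructor
  · -- main inequality
    have hw : wfun f g ℓ X ≤ -(F i (x (k + 1)) - F i X) := by
      apply iSup_le
      intro y
      apply EReal.le_neg_of_le_neg
      -- ⊢ F i (x (k+1)) - F i X ≤ -(⨅ j, t y j)
      set d' : EuclideanSpace ℝ (Fin n) := y - X with hd'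
      have hXd' : X + d' = y := by rw [hd']; abel
      set s : Fin m → EReal := fun j =>
        ((inner ℝ (gradient (f j) X) d' : ℝ) : EReal) + (g j (X + d') - g j X) with hs
      obtain ⟨j₀, hj₀⟩ := Finite.exists_max s
      have hpsi_eq : psi f g X d' = s j₀ :=
        le_antisymm (iSup_le hj₀) (le_iSup s j₀)
      set c' : EReal := ((ℓ / 2 * ‖d'‖ ^ 2 : ℝ) : EReal) with hc'
      have hkey : s j₀ + c' ≤
          -((((inner ℝ (gradient (f j₀) X) (X - y) : ℝ)) : EReal) + (g j₀ X - g j₀ y)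
            - ((ℓ / 2 * ‖X - y‖ ^ 2 : ℝ) : EReal)) := by
        apply EReal.le_neg_of_le_neg
        have hXy : X - y = -d' := by rw [hd']; abel
        have hinner : (inner ℝ (gradient (f j₀) X) (X - y) : ℝ)
            = -(inner ℝ (gradient (f j₀) X) d' : ℝ) := by
          rw [hXy, inner_neg_right]
        have hnorm : ‖X - y‖ = ‖d'‖ := by rw [hXy, norm_neg]
        rw [hinner, hnorm, hs]
        simp only [hXd']
        rcases ereal_cases (g j₀ y) (hg_ne_bot j₀ y) with hgy | ⟨sv, hgy⟩
        · rw [hgy, EReal.sub_top, EReal.add_bot, EReal.bot_sub]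
          exact bot_le
        · rcases ereal_cases (g j₀ X) (hg_ne_bot j₀ X) with hgX | ⟨rv, hgX⟩
          · rw [hgX, hgy, EReal.top_sub_coe, EReal.add_top_of_ne_bot (by simp),
              EReal.top_sub_coe]
            rw [show ((inner ℝ (gradient (f j₀) X) d' : ℝ) : EReal) + ((sv : EReal) - ⊤)
                + c' = ⊥ by rw [EReal.sub_top, EReal.add_bot, hc', EReal.bot_add]]
            rw [show -(⊥ : EReal) = ⊤ from rfl]
          · rw [hgX, hgy, hc']
            norm_cast
            linarith
      calc F i (x (k + 1)) - F i X ≤ psi f g X D + c := by rw [hstepk]; exact hB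
        _ ≤ psi f g X d' + c' := hmin k d'
        _ = s j₀ + c' := by rw [hpsi_eq]
        _ ≤ -((((inner ℝ (gradient (f j₀) X) (X - y) : ℝ)) : EReal) + (g j₀ X - g j₀ y)
            - ((ℓ / 2 * ‖X - y‖ ^ 2 : ℝ) : EReal)) := hkey
        _ ≤ -(⨅ j, (((inner ℝ (gradient (f j) X) (X - y) : ℝ)) : EReal) + (g j X - g j y)
            - ((ℓ / 2 * ‖X - y‖ ^ 2 : ℝ) : EReal)) := by
              apply EReal.neg_le_neg_iff.mpr
              exact iInf_le _ j₀
    exact EReal.le_neg_of_le_neg hw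
  · -- monotonicity
    rcases ereal_cases (g i X) (hg_ne_bot i X) with hgX | ⟨r, hgX⟩
    · rw [hF i X, hgX, EReal.coe_add_top]
      exact le_top
    · have hFX : F i X = ((f i X + r : ℝ) : EReal) := by
        rw [hF i X, hgX, EReal.coe_add]
      rw [hFX] at hdiff_le ⊢
      calc F i (x (k + 1)) = F i (x (k + 1)) - ((f i X + r : ℝ) : EReal)
            + ((f i X + r : ℝ) : EReal) := (EReal.sub_add_cancel).symm
        _ ≤ 0 + ((f i X + r : ℝ) : EReal) := add_le_add_left hdiff_le _
        _ = ((f i X + r : ℝ) : EReal) := by rw [zero_add]
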